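/- arXiv:1105.4416 — 2 statements merged into one kernel-verified Lean document; each statement's English description precedes it below -/
import Mathlib

section
/- A strictly upper triangular n×n matrix Z over a field has rank n-1 if and only if all entries z_{i,i+1} (for 1 ≤ i ≤ n-1) immediately above the diagonal are nonzero. -/
open Matrix

/-- A strictly upper triangular `n×n` matrix over a field has rank `n-1` iff all the
entries just above the principal diagonal are nonzero. -/
theorem stmt10 (n : ℕ) (F : Type) [Field F] (Z : Matrix (Fin n) (Fin n) F)
    (hZ : ∀ i j : Fin n, j ≤ i → Z i j = 0) :
    Z.rank = n - 1 ↔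
      ∀ (i : ℕ) (h : i + 1 < n), Z ⟨i, Nat.lt_of_succ_lt h⟩ ⟨i + 1, h⟩ ≠ 0 := by
  rcases n with _ | m
  · constructor
    · intro _ i h; omega
    · intro _
      have := Z.rank_le_card_width
      simp at this
      simpa using this
  -- B : the (m) × (m) submatrix of rows 0..m-1 and columns 1..m
  set B : Matrix (Fin m) (Fin m) F := Z.submatrix Fin.castSucc Fin.succ with hB
  -- selection matrices
  set R : Matrix (Fin (m+1)) (Fin m) F := fun i r => if i = r.castSucc then 1 else 0 with hRdef
  set S : Matrix (Fin m) (Fin (m+1)) F := fun s j => if j = s.succ then 1 else 0 with hSdef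
  have hRX : ∀ X : Matrix (Fin m) (Fin (m+1)) F, ∀ i j,
      (R * X) i j = Fin.lastCases 0 (fun r => X r j) i := by
    intro X i j
    rw [mul_apply]
    simp only [hRdef]
    refine Fin.lastCases ?_ (fun r0 => ?_) i
    · rw [Fin.lastCases_last]
      apply Finset.sum_eq_zero
      intro r _
      rw [if_neg (by exact fun h => (Fin.castSucc_lt_last r).ne' h), zero_mul]
    · rw [Fin.lastCases_castSucc]
      rw [Finset.sum_eq_single r0]
      · rw [if_pos rfl, one_mul]
      · intro r _ hr
        rw [if_neg (fun h => hr (Fin.castSucc_injective _ h.symm)), zero_mul]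
      · intro h; exact absurd (Finset.mem_univ r0) h
  have hXS : ∀ X : Matrix (Fin m) (Fin m) F, ∀ i j,
      (X * S) i j = Fin.cases 0 (fun s => X i s) j := by
    intro X i j
    rw [mul_apply]
    simp only [hSdef]
    refine Fin.cases ?_ (fun s0 => ?_) j
    · rw [Fin.cases_zero]
      apply Finset.sum_eq_zero
      intro s _
      rw [if_neg (Fin.succ_ne_zero s).symm, mul_zero]
    · rw [Fin.cases_succ]
      rw [Finset.sum_eq_single s0]
      · rw [if_pos rfl, mul_one]
      · intro s _ hs
        rw [if_neg (fun h => hs (Fin.succ_injective _ h.symm)), mul_zero]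
      · intro h; exact absurd (Finset.mem_univ s0) h
  have hfact : Z = R * (B * S) := by
    ext i j
    rw [hRX]
    refine Fin.lastCases ?_ (fun r0 => ?_) i
    · rw [Fin.lastCases_last]
      exact hZ _ _ (Fin.le_last j)
    · rw [Fin.lastCases_castSucc, hXS]
      refine Fin.cases ?_ (fun s0 => ?_) j
      · rw [Fin.cases_zero]
        exact hZ _ _ (Fin.zero_le _)
      · rw [Fin.cases_succ]; rfl
  have hfact2 : B = Rᵀ * Z * Sᵀ := by
    ext r s
    simp [hB, mul_apply, transpose_apply, hRdef, hSdef, Finset.sum_ite_eq, Matrix.transpose]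
  have h1 : Z.rank ≤ B.rank := by
    calc Z.rank = (R * (B * S)).rank := by rw [← hfact]
    _ ≤ (B * S).rank := rank_mul_le_right _ _
    _ ≤ B.rank := rank_mul_le_left _ _
  have h2 : B.rank ≤ Z.rank := by
    calc B.rank = (Rᵀ * Z * Sᵀ).rank := by rw [← hfact2]
    _ ≤ (Rᵀ * Z).rank := rank_mul_le_left _ _
    _ ≤ Z.rank := rank_mul_le_right _ _
  have hZB : Z.rank = B.rank := le_antisymm h1 h2
  have hBtri : B.BlockTriangular id := by
    intro i j hij
    exact hZ _ _ (by simpa [Fin.le_def] using hij)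
  have hdet : B.det = ∏ i, B i i := det_of_upperTriangular hBtri
  have hdiag : ∀ i : Fin m, B i i = Z ⟨i.1, Nat.lt_of_succ_lt (by omega)⟩ ⟨i.1 + 1, by omega⟩ := by
    intro i
    rfl
  constructor
  · intro hrank i h
    have hm : i < m := by omega
    have hBr : B.rank = m := by rw [← hZB, hrank]; omega
    have hunit : IsUnit B := by
      rw [← mulVec_surjective_iff_isUnit]
      have : LinearMap.range B.mulVecLin = ⊤ := by
        apply Submodule.eq_top_of_finrank_eq
        rw [← Matrix.rank, hBr]
        simp [Module.finrank_pi]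
      intro v
      obtain ⟨w, hw⟩ := LinearMap.range_eq_top.mp this v
      exact ⟨w, hw⟩
    have hdet0 : B.det ≠ 0 := by
      intro h0
      exact (Matrix.isUnit_iff_isUnit_det B).mp hunit |>.ne_zero h0
    rw [hdet] at hdet0
    have := Finset.prod_ne_zero_iff.mp hdet0 ⟨i, hm⟩ (Finset.mem_univ _)
    rw [hdiag ⟨i, hm⟩] at this
    convert this using 2
  · intro h
    have hdet0 : B.det ≠ 0 := by
      rw [hdet]
      apply Finset.prod_ne_zero_iff.mpr
      intro i _
      rw [hdiag i]
      exact h i.1 (by omega)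
    have hunit : IsUnit B := (Matrix.isUnit_iff_isUnit_det B).mpr (isUnit_iff_ne_zero.mpr hdet0)
    have := rank_of_isUnit B hunit
    rw [hZB, this]
    simp
end

section
/- The proportion of strictly upper triangular n×n matrices over F_q having rank n-1 among all strictly upper triangular matrices equals ((q-1)/q)^{n-1}. -/
open Matrix

open Finset Module

section Aux

variable {F : Type} [Field F]

set_option maxHeartbeats 1000000 in
lemma aux_rank_cols {m n : ℕ} (A : Matrix (Fin m) (Fin n) F) (s : Finset (Fin n))
    (h : ∀ j ∉ s, ∀ i, A i j = 0) : A.rank ≤ s.card := by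
  classical
  rw [Matrix.rank_eq_finrank_span_cols]
  have hsub : Set.range Aᵀ ⊆ insert 0 ((s.image fun j => Aᵀ j : Finset (Fin m → F)) : Set (Fin m → F)) := by
    rintro _ ⟨j, rfl⟩
    by_cases hj : j ∈ s
    · refine Set.mem_insert_iff.2 (Or.inr ?_)
      rw [Finset.coe_image]
      exact Set.mem_image_of_mem _ hj
    · exact Set.mem_insert_iff.2 (Or.inl (by ext i; exact h j hj i))
  have h1 : finrank F (Submodule.span F (Set.range Aᵀ)) ≤
      finrank F (Submodule.span F (insert 0 ((s.image fun j => Aᵀ j : Finset (Fin m → F)) : Set (Fin m → F)))) :=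
    Submodule.finrank_mono (Submodule.span_mono hsub)
  rw [Submodule.span_insert_zero] at h1
  exact h1.trans ((finrank_span_finset_le_card _).trans Finset.card_image_le)

lemma aux_rank_rows {m n : ℕ} (A : Matrix (Fin m) (Fin n) F) (s : Finset (Fin m))
    (h : ∀ i ∉ s, ∀ j, A i j = 0) : A.rank ≤ s.card := by
  rw [← Matrix.rank_transpose]
  exact aux_rank_cols Aᵀ s (fun i hi j => h i hi j)

lemma aux_rank_sub_cols {m n o : ℕ} (A : Matrix (Fin m) (Fin n) F) (f : Fin o → Fin n) :
    (A.submatrix id f).rank ≤ A.rank := by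
  rw [Matrix.rank_eq_finrank_span_cols, Matrix.rank_eq_finrank_span_cols]
  refine Submodule.finrank_mono (Submodule.span_mono ?_)
  rintro _ ⟨j, rfl⟩
  exact ⟨f j, rfl⟩

lemma aux_rank_sub_rows {m n o : ℕ} (A : Matrix (Fin m) (Fin n) F) (f : Fin o → Fin m) :
    (A.submatrix f id).rank ≤ A.rank := by
  rw [← Matrix.rank_transpose, ← Matrix.rank_transpose A, Matrix.transpose_submatrix]
  exact aux_rank_sub_cols Aᵀ f

lemma aux_rank_add {m n : ℕ} (A B : Matrix (Fin m) (Fin n) F) :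
    (A + B).rank ≤ A.rank + B.rank := by
  have hmv : (A + B).mulVecLin = A.mulVecLin + B.mulVecLin := by
    ext v i; simp [Matrix.add_mulVec]
  have hle : LinearMap.range (A + B).mulVecLin ≤
      LinearMap.range A.mulVecLin ⊔ LinearMap.range B.mulVecLin := by
    rw [hmv]
    rintro _ ⟨x, rfl⟩
    exact Submodule.add_mem_sup ⟨x, rfl⟩ ⟨x, rfl⟩
  calc (A + B).rank
      ≤ finrank F ↥(LinearMap.range A.mulVecLin ⊔ LinearMap.range B.mulVecLin) :=
        Submodule.finrank_mono hle
    _ ≤ A.rank + B.rank := Submodule.finrank_add_le_finrank_add_finrank _ _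

/-- A strictly upper triangular matrix has rank `n-1` iff all superdiagonal entries are nonzero. -/
lemma aux_rank_char (n : ℕ) (Z : Matrix (Fin n) (Fin n) F)
    (hZ : ∀ i j : Fin n, j ≤ i → Z i j = 0) :
    Z.rank = n - 1 ↔ ∀ i j : Fin n, (j : ℕ) = (i : ℕ) + 1 → Z i j ≠ 0 := by
  constructor
  · intro hrank
    by_contra hcon
    push_neg at hcon
    obtain ⟨i, j, hij, hz⟩ := hcon
    set k : ℕ := (i : ℕ) with hk
    have hkn : k + 1 < n := hij ▸ j.2
    set B : Matrix (Fin n) (Fin n) F := fun a b => if (b : ℕ) ≤ k + 1 then Z a b else 0 with hB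
    set C : Matrix (Fin n) (Fin n) F := fun a b => if (b : ℕ) ≤ k + 1 then 0 else Z a b with hC
    have hZBC : Z = B + C := by
      ext a b
      rw [Matrix.add_apply]; by_cases hb : (b : ℕ) ≤ k + 1 <;> simp [hB, hC, hb]
    have hBr : B.rank ≤ k := by
      refine le_trans (aux_rank_rows B (Finset.Iio ⟨k, by omega⟩) ?_) (by simp)
      intro a ha b
      simp only [Finset.mem_Iio, Fin.lt_def] at ha
      push_neg at ha
      by_cases hb : (b : ℕ) ≤ k + 1
      · simp only [hB, if_pos hb]
        rcases lt_or_ge (a : ℕ) (b : ℕ) with hab | hab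
        · -- a ≥ k, b > a, b ≤ k+1 → a = k, b = k + 1
          have ha' : (a : ℕ) = k := by omega
          have hb' : (b : ℕ) = k + 1 := by omega
          have : a = i := Fin.ext (by omega)
          have : b = j := Fin.ext (by omega)
          subst_vars
          convert hz using 2 <;> exact Fin.ext (by omega)
        · exact hZ a b (by rwa [Fin.le_def])
      · simp [hB, hb]
    have hCr : C.rank ≤ n - (k + 2) := by
      refine le_trans (aux_rank_cols C (Finset.Ioi ⟨k + 1, hkn⟩) ?_) (by simp; omega)
      intro b hb a
      simp only [Finset.mem_Ioi, Fin.lt_def] at hb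
      push_neg at hb
      simp [hC, hb]
    have : Z.rank ≤ n - 2 := by
      rw [hZBC]
      calc (B + C).rank ≤ B.rank + C.rank := aux_rank_add B C
        _ ≤ k + (n - (k + 2)) := add_le_add hBr hCr
        _ ≤ n - 2 := by omega
    omega
  · intro hd
    rcases Nat.eq_zero_or_pos n with rfl | hn
    · have : Z = 0 := by ext a; exact a.elim0
      simp [this]
    refine le_antisymm ?_ ?_
    · refine le_trans (aux_rank_cols Z ({⟨0, hn⟩} : Finset (Fin n))ᶜ ?_) ?_
      · intro b hb a
        simp only [Finset.mem_compl, Finset.mem_singleton, not_not] at hb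
        subst hb
        exact hZ a ⟨0, hn⟩ (by simp [Fin.le_def])
      · simp [Finset.card_compl]
    · -- lower bound via invertible submatrix
      set f : Fin (n - 1) → Fin n := fun t => ⟨(t : ℕ), by omega⟩ with hf
      set g : Fin (n - 1) → Fin n := fun t => ⟨(t : ℕ) + 1, by omega⟩ with hg
      set B : Matrix (Fin (n - 1)) (Fin (n - 1)) F := Z.submatrix f g with hB
      have hBt : B.BlockTriangular id := by
        intro a b hab
        have hba : (b : ℕ) < (a : ℕ) := hab
        refine hZ (f a) (g b) ?_
        rw [Fin.le_def]
        show (b : ℕ) + 1 ≤ (a : ℕ)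
        omega
      have hdet : B.det ≠ 0 := by
        rw [Matrix.det_of_upperTriangular hBt]
        refine Finset.prod_ne_zero_iff.mpr fun t _ => ?_
        exact hd (f t) (g t) rfl
      have hBrank : B.rank = n - 1 := by
        rw [Matrix.rank_of_isUnit B (Matrix.isUnit_iff_isUnit_det B |>.mpr
          (isUnit_iff_ne_zero.mpr hdet)), Fintype.card_fin]
      calc n - 1 = B.rank := hBrank.symm
        _ = ((Z.submatrix id g).submatrix f id).rank := by
            rw [Matrix.submatrix_submatrix]; rfl
        _ ≤ (Z.submatrix id g).rank := aux_rank_sub_rows _ f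
        _ ≤ Z.rank := aux_rank_sub_cols Z g

end Aux

section Count

variable {F : Type} [Field F]

/-- Strictly-upper positions. -/
abbrev SP (n : ℕ) := {p : Fin n × Fin n // p.1 < p.2}

/-- Superdiagonal positions. -/
def Dp {n : ℕ} (p : SP n) : Prop := (p.1.2 : ℕ) = (p.1.1 : ℕ) + 1

instance {n : ℕ} : DecidablePred (Dp (n := n)) := fun p => by unfold Dp; infer_instance

/-- Strictly upper triangular matrices are determined by their strictly-upper entries. -/
def eDen (n : ℕ) (F : Type) [Field F] :
    {Z : Matrix (Fin n) (Fin n) F // ∀ i j : Fin n, j ≤ i → Z i j = 0} ≃ (SP n → F) where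
  toFun Z p := Z.1 p.1.1 p.1.2
  invFun f := ⟨fun i j => if h : i < j then f ⟨(i, j), h⟩ else 0, by
    intro i j hji
    show (if h : i < j then f ⟨(i, j), h⟩ else 0) = 0
    rw [dif_neg (not_lt.mpr hji)]⟩
  left_inv Z := by
    apply Subtype.ext
    ext i j
    by_cases h : i < j
    · simp only [dif_pos h]
    · simp only [dif_neg h]
      exact (Z.2 i j (not_lt.1 h)).symm
  right_inv f := by
    funext p
    simp only [p.2, dif_pos]

def eNum (n : ℕ) (F : Type) [Field F] :
    {Z : Matrix (Fin n) (Fin n) F //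
        (∀ i j : Fin n, j ≤ i → Z i j = 0) ∧
          ∀ i j : Fin n, (j : ℕ) = (i : ℕ) + 1 → Z i j ≠ 0} ≃
      {f : SP n → F // ∀ p : SP n, Dp p → f p ≠ 0} :=
  ((Equiv.subtypeSubtypeEquivSubtypeInter _ _).symm.trans
    ((eDen n F).subtypeEquiv fun Z => by
      constructor
      · intro h p hp
        exact h p.1.1 p.1.2 hp
      · intro h i j hij
        exact h ⟨(i, j), by show (i : ℕ) < (j : ℕ); omega⟩ hij))

def eSplit (n : ℕ) (F : Type) [Field F] :
    {f : SP n → F // ∀ p : SP n, Dp p → f p ≠ 0} ≃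
      ({p : SP n // Dp p} → {x : F // x ≠ 0}) × ({p : SP n // ¬Dp p} → F) where
  toFun f := (fun d => ⟨f.1 d.1, f.2 d.1 d.2⟩, fun r => f.1 r.1)
  invFun x := ⟨fun p => if h : Dp p then (x.1 ⟨p, h⟩).1 else x.2 ⟨p, h⟩, by
    intro p hp
    show (if h : Dp p then (x.1 ⟨p, h⟩ : F) else x.2 ⟨p, h⟩) ≠ 0
    rw [dif_pos hp]
    exact (x.1 ⟨p, hp⟩).2⟩
  left_inv f := by
    apply Subtype.ext
    funext p
    by_cases h : Dp p <;> simp [h]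
  right_inv x := by
    refine Prod.ext ?_ ?_
    · funext d
      apply Subtype.ext
      simp [d.2]
    · funext r
      simp [r.2]

def eD (n : ℕ) : {p : SP n // Dp p} ≃ Fin (n - 1) where
  toFun x := ⟨(x.1.1.1 : ℕ), by
    have h2 := x.1.1.2.2
    have h3 := x.2
    unfold Dp at h3
    omega⟩
  invFun k := ⟨⟨(⟨(k : ℕ), by have := k.isLt; omega⟩, ⟨(k : ℕ) + 1, by have := k.isLt; omega⟩),
      by show (k : ℕ) < (k : ℕ) + 1; omega⟩, by unfold Dp; rfl⟩
  left_inv x := by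
    have h3 := x.2
    unfold Dp at h3
    apply Subtype.ext
    apply Subtype.ext
    apply Prod.ext <;> apply Fin.ext <;> simp <;> omega
  right_inv k := by apply Fin.ext; rfl

end Count

/-- The proportion of strictly upper triangular `n×n` matrices over `F_q` of rank `n-1`
among all strictly upper triangular matrices equals `((q-1)/q)^{n-1}`. -/
theorem stmt12 (n q : ℕ) (hn : 1 ≤ n) (F : Type) [Field F] [Fintype F]
    (hq : Fintype.card F = q) :
    (Nat.card {Z : Matrix (Fin n) (Fin n) F //
          (∀ i j : Fin n, j ≤ i → Z i j = 0) ∧ Z.rank = n - 1} : ℝ)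
        / (Nat.card {Z : Matrix (Fin n) (Fin n) F // ∀ i j : Fin n, j ≤ i → Z i j = 0} : ℝ)
      = (((q : ℝ) - 1) / q) ^ (n - 1) := by
  classical
  have hq2 : 1 < q := hq ▸ Fintype.one_lt_card
  have hcardne : Nat.card {x : F // x ≠ 0} = q - 1 := by
    rw [Nat.card_eq_fintype_card, Fintype.card_subtype_compl, Fintype.card_subtype_eq, hq]
  have ha : Nat.card {p : SP n // Dp p} = n - 1 := by
    rw [Nat.card_congr (eD n), Nat.card_eq_fintype_card, Fintype.card_fin]
  have hnum : Nat.card {Z : Matrix (Fin n) (Fin n) F //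
      (∀ i j : Fin n, j ≤ i → Z i j = 0) ∧ Z.rank = n - 1}
      = (q - 1) ^ (n - 1) * q ^ Nat.card {p : SP n // ¬Dp p} := by
    rw [Nat.card_congr (((Equiv.subtypeEquivRight fun Z =>
        and_congr_right fun hZ => aux_rank_char n Z hZ).trans (eNum n F)).trans (eSplit n F)),
      Nat.card_prod, Nat.card_fun, Nat.card_fun, hcardne, ha,
      Nat.card_eq_fintype_card (α := F), hq]
  have hden : Nat.card {Z : Matrix (Fin n) (Fin n) F // ∀ i j : Fin n, j ≤ i → Z i j = 0}
      = q ^ (n - 1) * q ^ Nat.card {p : SP n // ¬Dp p} := by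
    rw [Nat.card_congr (eDen n F), Nat.card_fun, Nat.card_eq_fintype_card (α := F), hq,
      ← pow_add]
    congr 1
    rw [Nat.card_congr (Equiv.sumCompl (Dp (n := n))).symm, Nat.card_sum, ha]
  rw [hnum, hden]
  have hq0 : (q : ℝ) ≠ 0 := Nat.cast_ne_zero.mpr (Nat.one_le_iff_ne_zero.mp hq2.le)
  have hqb : (q : ℝ) ^ Nat.card {p : SP n // ¬Dp p} ≠ 0 := pow_ne_zero _ hq0
  have h1q : 1 ≤ q := hq2.le
  push_cast [Nat.cast_sub h1q]
  rw [mul_div_mul_right _ _ hqb, div_pow]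
end
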